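/- arXiv:1011.4154 — 5 statements merged into one kernel-verified Lean document; each statement's English description precedes it below -/
import Mathlib

section
/- Let x : E⁰ → ℤ be finitely supported with every vertex in its support a finite emitter, and suppose x satisfies the kernel condition. Then S↑(x) and S↓(x) are finite sets and have the same number of elements. -/
/-- The index set `S↑(x)`. -/
def SUp {V E : Type*} (s : E → V) (x : V → ℤ) : Set ((E ⊕ V) × ℤ) :=
  {q | match q.1 with
       | Sum.inl e => 1 ≤ q.2 ∧ q.2 ≤ -x (s e)
       | Sum.inr v => 1 ≤ q.2 ∧ q.2 ≤ x v}

/-- The index set `S↓(x)`. -/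
def SDn {V E : Type*} (s : E → V) (x : V → ℤ) : Set ((E ⊕ V) × ℤ) :=
  {q | match q.1 with
       | Sum.inl e => 1 ≤ q.2 ∧ q.2 ≤ x (s e)
       | Sum.inr v => 1 ≤ q.2 ∧ q.2 ≤ -x v}

open Classical in
/-- The finset realizing `SDn s x`, given finsets `Fs`, `Vs` containing the relevant
supports. -/
noncomputable def SDnFinset {V E : Type*} (s : E → V) (x : V → ℤ)
    (Fs : Finset E) (Vs : Finset V) : Finset ((E ⊕ V) × ℤ) :=
  Fs.biUnion (fun e => ({(Sum.inl e : E ⊕ V)} : Finset (E ⊕ V)) ×ˢ Finset.Icc 1 (x (s e)))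
    ∪ Vs.biUnion (fun v => ({(Sum.inr v : E ⊕ V)} : Finset (E ⊕ V)) ×ˢ Finset.Icc 1 (-x v))

lemma sdn_eq_coe {V E : Type*} (s : E → V) (x : V → ℤ) (Fs : Finset E) (Vs : Finset V)
    (hF : ∀ e, x (s e) ≠ 0 → e ∈ Fs) (hV : ∀ v, x v ≠ 0 → v ∈ Vs) :
    SDn s x = ↑(SDnFinset s x Fs Vs) := by
  classical
  ext ⟨p, i⟩
  cases p with
  | inl e =>
    simp only [SDn, SDnFinset, Set.mem_setOf_eq, Finset.coe_union, Set.mem_union,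
      Finset.mem_coe, Finset.mem_biUnion, Finset.mem_product, Finset.mem_singleton,
      Finset.mem_Icc, Prod.fst, Prod.snd]
    constructor
    · rintro ⟨h1, h2⟩
      exact Or.inl ⟨e, hF e (by omega), ⟨rfl, h1, h2⟩⟩
    · rintro (⟨e', _, ⟨he, h1, h2⟩⟩ | ⟨v, _, ⟨he, _⟩⟩)
      · cases he; exact ⟨h1, h2⟩
      · exact absurd he (by simp)
  | inr v =>
    simp only [SDn, SDnFinset, Set.mem_setOf_eq, Finset.coe_union, Set.mem_union,
      Finset.mem_coe, Finset.mem_biUnion, Finset.mem_product, Finset.mem_singleton,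
      Finset.mem_Icc, Prod.fst, Prod.snd]
    constructor
    · rintro ⟨h1, h2⟩
      exact Or.inr ⟨v, hV v (by omega), ⟨rfl, h1, h2⟩⟩
    · rintro (⟨e', _, ⟨he, _⟩⟩ | ⟨v', _, ⟨he, h1, h2⟩⟩)
      · exact absurd he (by simp)
      · cases he; exact ⟨h1, h2⟩

lemma sdn_card {V E : Type*} (s : E → V) (x : V → ℤ) (Fs : Finset E) (Vs : Finset V) :
    (SDnFinset s x Fs Vs).card
      = ∑ e ∈ Fs, (x (s e)).toNat + ∑ v ∈ Vs, (-x v).toNat := by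
  classical
  unfold SDnFinset
  have d1 : ∀ a ∈ Fs, ∀ b ∈ Fs, a ≠ b →
      Disjoint (({(Sum.inl a : E ⊕ V)} : Finset (E ⊕ V)) ×ˢ Finset.Icc 1 (x (s a)))
        (({(Sum.inl b : E ⊕ V)} : Finset (E ⊕ V)) ×ˢ Finset.Icc 1 (x (s b))) := by
    intro a _ b _ hab
    simp only [Finset.disjoint_left, Finset.mem_product, Finset.mem_singleton]
    rintro ⟨p, i⟩ ⟨h1, _⟩ ⟨h2, _⟩
    exact hab (Sum.inl_injective (h1.symm.trans h2))
  have d2 : ∀ a ∈ Vs, ∀ b ∈ Vs, a ≠ b →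
      Disjoint (({(Sum.inr a : E ⊕ V)} : Finset (E ⊕ V)) ×ˢ Finset.Icc 1 (-x a))
        (({(Sum.inr b : E ⊕ V)} : Finset (E ⊕ V)) ×ˢ Finset.Icc 1 (-x b)) := by
    intro a _ b _ hab
    simp only [Finset.disjoint_left, Finset.mem_product, Finset.mem_singleton]
    rintro ⟨p, i⟩ ⟨h1, _⟩ ⟨h2, _⟩
    exact hab (Sum.inr_injective (h1.symm.trans h2))
  have dmain : Disjoint
      (Fs.biUnion (fun e => ({(Sum.inl e : E ⊕ V)} : Finset (E ⊕ V)) ×ˢ Finset.Icc 1 (x (s e))))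
      (Vs.biUnion (fun v => ({(Sum.inr v : E ⊕ V)} : Finset (E ⊕ V)) ×ˢ Finset.Icc 1 (-x v))) := by
    simp only [Finset.disjoint_left, Finset.mem_biUnion, Finset.mem_product,
      Finset.mem_singleton]
    rintro ⟨p, i⟩ ⟨e, _, h1, _⟩ ⟨v, _, h2, _⟩
    exact Sum.inl_ne_inr (h1.symm.trans h2)
  rw [Finset.card_union_of_disjoint dmain, Finset.card_biUnion d1, Finset.card_biUnion d2]
  congr 1
  · apply Finset.sum_congr rfl
    intro a _
    rw [Finset.card_product, Finset.card_singleton, one_mul, Int.card_Icc]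
    congr 1
    omega
  · apply Finset.sum_congr rfl
    intro a _
    rw [Finset.card_product, Finset.card_singleton, one_mul, Int.card_Icc]
    congr 1
    omega

lemma sup_eq_sdn_neg {V E : Type*} (s : E → V) (x : V → ℤ) :
    SUp s x = SDn s (-x) := by
  ext ⟨p, i⟩
  cases p <;> simp [SUp, SDn]

theorem stmt4 {V E : Type*} [Countable V] [Countable E] (r s : E → V)
    (x : V → ℤ) (hsupp : {v | x v ≠ 0}.Finite)
    (hemit : ∀ v, x v ≠ 0 → {e | s e = v}.Finite)
    (hker : ∀ v, ∑ᶠ e ∈ {e | r e = v}, x (s e) = x v) :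
    (SUp s x).Finite ∧ (SDn s x).Finite ∧ (SUp s x).ncard = (SDn s x).ncard := by
  classical
  have hFfin : {e | x (s e) ≠ 0}.Finite := by
    apply Set.Finite.subset (Set.Finite.biUnion hsupp (fun v hv => hemit v hv))
    intro e he
    exact Set.mem_biUnion (show s e ∈ {v | x v ≠ 0} from he) rfl
  set Fs : Finset E := hFfin.toFinset with hFs
  set Vs : Finset V := hsupp.toFinset with hVs
  have hFmem : ∀ e, x (s e) ≠ 0 → e ∈ Fs := fun e he => hFfin.mem_toFinset.mpr he
  have hVmem : ∀ v, x v ≠ 0 → v ∈ Vs := fun v hv => hsupp.mem_toFinset.mpr hv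
  have hDn := sdn_eq_coe s x Fs Vs hFmem hVmem
  have hUp : SUp s x = ↑(SDnFinset s (-x) Fs Vs) := by
    rw [sup_eq_sdn_neg]
    exact sdn_eq_coe s (-x) Fs Vs (by simpa using hFmem) (by simpa using hVmem)
  refine ⟨hUp ▸ (SDnFinset s (-x) Fs Vs).finite_toSet,
    hDn ▸ (SDnFinset s x Fs Vs).finite_toSet, ?_⟩
  rw [hUp, hDn, Set.ncard_coe_finset, Set.ncard_coe_finset, sdn_card, sdn_card]
  -- key: ∑ e in Fs, x (s e) = ∑ v in Vs, x v
  have key : ∑ e ∈ Fs, x (s e) = ∑ v ∈ Vs, x v := by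
    set R : Finset V := Finset.image r Fs ∪ Vs with hR
    have hmaps : ∀ e ∈ Fs, r e ∈ R := fun e he =>
      Finset.mem_union_left _ (Finset.mem_image_of_mem r he)
    rw [← Finset.sum_fiberwise_of_maps_to hmaps (fun e => x (s e))]
    have hfib : ∀ v ∈ R, ∑ e ∈ Fs.filter (fun e => r e = v), x (s e) = x v := by
      intro v _
      rw [← hker v]
      symm
      apply finsum_mem_eq_sum_of_inter_support_eq
      ext e
      simp only [Set.mem_inter_iff, Set.mem_setOf_eq, Function.mem_support,
        Finset.coe_filter, Finset.mem_coe]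
      constructor
      · rintro ⟨h1, h2⟩; exact ⟨⟨hFmem e h2, h1⟩, h2⟩
      · rintro ⟨⟨_, h1⟩, h2⟩; exact ⟨h1, h2⟩
    rw [Finset.sum_congr rfl hfib]
    symm
    apply Finset.sum_subset (Finset.subset_union_right)
    intro v _ hv
    by_contra h
    exact hv (hVmem v h)
  -- conclude by casting to ℤ
  have cast_eq : ∀ (a : ℤ), ((-a).toNat : ℤ) = (a.toNat : ℤ) - a := fun a => by omega
  simp only [Pi.neg_apply, neg_neg]
  have H : ((∑ e ∈ Fs, (-x (s e)).toNat + ∑ v ∈ Vs, (x v).toNat : ℕ) : ℤ)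
      = ((∑ e ∈ Fs, (x (s e)).toNat + ∑ v ∈ Vs, (-x v).toNat : ℕ) : ℤ) := by
    push_cast
    simp only [cast_eq]
    rw [Finset.sum_sub_distrib, Finset.sum_sub_distrib]
    linarith [key]
  exact_mod_cast H
end

section
/- With notation as in the context, VV* = ∑_{w ∈ E⁰, 1≤i≤x_w, e ∈ E¹ with s(e)=w} (s_e s_e*)·E_{m↑(w,i),m↑(w,i)} + ∑_{w ∈ E⁰, 1≤i≤−x_w, e ∈ E¹ with s(e)=w} p_{r(e)}·E_{m↑(e,i),m↑(e,i)}. -/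
/-- The range map extended to `E¹ ⊕ E⁰` via the convention `r v = v` for vertices. -/
def rext {V E : Type*} (r : E → V) : E ⊕ V → V := Sum.elim r id

/-- The element `V` of `M_h(A)` associated to a family `{p_v, s_e}` and `x`:
`V = ∑_{w, 1≤i≤x_w, s(e)=w} s_e·E_{m↑(w,i),m↓(e,i)} + ∑_{w, 1≤i≤-x_w, s(e)=w} s_e*·E_{m↑(e,i),m↓(w,i)}`,
where the first sum is indexed by the pairs `(e,i) ∈ S↓(x)` with `e ∈ E¹` (and `w = s(e)`),
and the second by the pairs `(e,i) ∈ S↑(x)` with `e ∈ E¹` (and `w = s(e)`). -/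
noncomputable def Vmat {V E A : Type*} [AddCommMonoid A] [Star A]
    (s : E → V) (x : V → ℤ) (S : E → A) {h : ℕ}
    [Fintype (SUp s x)] [Fintype (SDn s x)]
    (mup : SUp s x ≃ Fin h) (mdn : SDn s x ≃ Fin h) : Matrix (Fin h) (Fin h) A :=
  (∑ q : SDn s x, match q with
    | ⟨(Sum.inl e, i), hq⟩ =>
        Matrix.single (mup ⟨(Sum.inr (s e), i), hq⟩) (mdn ⟨(Sum.inl e, i), hq⟩) (S e)
    | ⟨(Sum.inr _, _), _⟩ => 0)
  + (∑ q : SUp s x, match q with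
    | ⟨(Sum.inl e, i), hq⟩ =>
        Matrix.single (mup ⟨(Sum.inl e, i), hq⟩) (mdn ⟨(Sum.inr (s e), i), hq⟩) (star (S e))
    | ⟨(Sum.inr _, _), _⟩ => 0)

/-- The element `P` of `M_h(A)`:
`P = ∑_{w, 1≤i≤x_w} p_w·E_{m↑(w,i),m↑(w,i)} + ∑_{w, 1≤i≤-x_w, s(e)=w} p_{r(e)}·E_{m↑(e,i),m↑(e,i)}`,
written as a single sum over `S↑(x)` using the convention `r v = v`. -/
noncomputable def Pmat {V E A : Type*} [AddCommMonoid A]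
    (r s : E → V) (x : V → ℤ) (p : V → A) {h : ℕ}
    [Fintype (SUp s x)]
    (mup : SUp s x ≃ Fin h) : Matrix (Fin h) (Fin h) A :=
  ∑ q : SUp s x, Matrix.single (mup q) (mup q) (p (rext r q.1.1))

/- auxiliary summand functions -/
noncomputable def Amat' {V E A : Type*} [AddCommMonoid A]
    (s : E → V) (x : V → ℤ) (S : E → A) {h : ℕ}
    [Fintype (SUp s x)] [Fintype (SDn s x)]
    (mup : SUp s x ≃ Fin h) (mdn : SDn s x ≃ Fin h) : SDn s x → Matrix (Fin h) (Fin h) A :=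
  fun q => match q with
  | ⟨(Sum.inl e, i), hq⟩ =>
      Matrix.single (mup ⟨(Sum.inr (s e), i), hq⟩) (mdn ⟨(Sum.inl e, i), hq⟩) (S e)
  | ⟨(Sum.inr _, _), _⟩ => 0

noncomputable def Bmat' {V E A : Type*} [AddCommMonoid A] [Star A]
    (s : E → V) (x : V → ℤ) (S : E → A) {h : ℕ}
    [Fintype (SUp s x)] [Fintype (SDn s x)]
    (mup : SUp s x ≃ Fin h) (mdn : SDn s x ≃ Fin h) : SUp s x → Matrix (Fin h) (Fin h) A :=
  fun q => match q with
  | ⟨(Sum.inl e, i), hq⟩ =>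
      Matrix.single (mup ⟨(Sum.inl e, i), hq⟩) (mdn ⟨(Sum.inr (s e), i), hq⟩) (star (S e))
  | ⟨(Sum.inr _, _), _⟩ => 0

noncomputable def Cmat' {V E A : Type*} [NonUnitalNonAssocSemiring A] [Star A]
    (s : E → V) (x : V → ℤ) (S : E → A) {h : ℕ}
    [Fintype (SUp s x)] [Fintype (SDn s x)]
    (mup : SUp s x ≃ Fin h) : SDn s x → Matrix (Fin h) (Fin h) A :=
  fun q => match q with
  | ⟨(Sum.inl e, i), hq⟩ =>
      Matrix.single (mup ⟨(Sum.inr (s e), i), hq⟩) (mup ⟨(Sum.inr (s e), i), hq⟩)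
        (S e * star (S e))
  | ⟨(Sum.inr _, _), _⟩ => 0

noncomputable def R1mat' {V E A : Type*} [AddCommMonoid A]
    (r s : E → V) (x : V → ℤ) (p : V → A) {h : ℕ}
    [Fintype (SUp s x)]
    (mup : SUp s x ≃ Fin h) : SUp s x → Matrix (Fin h) (Fin h) A :=
  fun q => match q with
  | ⟨(Sum.inl e, i), hq⟩ =>
      Matrix.single (mup ⟨(Sum.inl e, i), hq⟩) (mup ⟨(Sum.inl e, i), hq⟩) (p (r e))
  | ⟨(Sum.inr _, _), _⟩ => 0

noncomputable def R2mat' {V E A : Type*} [AddCommMonoid A] [Mul A] [Star A]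
    (s : E → V) (x : V → ℤ) (S : E → A) {h : ℕ}
    [Fintype (SUp s x)]
    (mup : SUp s x ≃ Fin h) : SUp s x → Matrix (Fin h) (Fin h) A :=
  fun q => match q with
  | ⟨(Sum.inr w, i), hq⟩ =>
      Matrix.single (mup ⟨(Sum.inr w, i), hq⟩) (mup ⟨(Sum.inr w, i), hq⟩)
        (∑ᶠ e ∈ {e | s e = w}, S e * star (S e))
  | ⟨(Sum.inl _, _), _⟩ => 0

noncomputable def piAux {V E : Type*}
    (s : E → V) (x : V → ℤ) {h : ℕ}
    [Fintype (SUp s x)] [Fintype (SDn s x)]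
    (mup : SUp s x ≃ Fin h) (mdn : SDn s x ≃ Fin h) : SDn s x → SUp s x :=
  fun q => match q with
  | ⟨(Sum.inl e, i), hq⟩ => ⟨(Sum.inr (s e), i), hq⟩
  | ⟨(Sum.inr w, i), hq⟩ => mup.symm (mdn ⟨(Sum.inr w, i), hq⟩)

lemma star_stdBasisMatrix' {n A : Type*} [DecidableEq n] [AddMonoid A] [StarAddMonoid A]
    (i j : n) (a : A) :
    star (Matrix.single i j a) = Matrix.single j i (star a) := by
  ext k l
  simp only [Matrix.star_apply, Matrix.single, Matrix.of_apply]
  split_ifs with h1 h2 h2 <;> first | (exfalso; tauto) | simp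

lemma stdBasisMatrix_sum' {n A E : Type*} [DecidableEq n] [AddCommMonoid A]
    (i j : n) (F : Finset E) (f : E → A) :
    Matrix.single i j (∑ e ∈ F, f e) = ∑ e ∈ F, Matrix.single i j (f e) := by
  classical
  induction F using Finset.cons_induction with
  | empty => simp
  | cons e F he ih => rw [Finset.sum_cons, Finset.sum_cons, Matrix.single_add, ih]

theorem stmt7 {V E A : Type*} [Countable V] [Countable E] [NonUnitalCStarAlgebra A]
    (r s : E → V) (p : V → A) (S : E → A)
    (hp_star : ∀ v, star (p v) = p v)
    (hp_idem : ∀ v, p v * p v = p v)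
    (hp_orth : ∀ v w, v ≠ w → p v * p w = 0)
    (hCK1 : ∀ e, star (S e) * S e = p (r e))
    (hS_orth : ∀ e f, e ≠ f → star (S e) * S f = 0)
    (hCK3 : ∀ e, p (s e) * S e = S e)
    (x : V → ℤ) (hsupp : {v | x v ≠ 0}.Finite)
    (hemit : ∀ v, x v ≠ 0 → {e | s e = v}.Finite)
    (hker : ∀ v, ∑ᶠ e ∈ {e | r e = v}, x (s e) = x v)
    {h : ℕ} [Fintype (SUp s x)] [Fintype (SDn s x)]
    (mup : SUp s x ≃ Fin h) (mdn : SDn s x ≃ Fin h)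
    (hcomp : ∀ (q : SUp s x) (q' : SDn s x), mup q = mdn q' → rext r q.1.1 = rext r q'.1.1) :
    Vmat s x S mup mdn * star (Vmat s x S mup mdn) =
      ∑ q : SUp s x, Matrix.single (mup q) (mup q)
        (match q.1.1 with
         | Sum.inl e => p (r e)
         | Sum.inr w => ∑ᶠ e ∈ {e | s e = w}, S e * star (S e)) := by

  classical
  have hV : Vmat s x S mup mdn =
      (∑ q : SDn s x, Amat' s x S mup mdn q) + (∑ q : SUp s x, Bmat' s x S mup mdn q) := rfl
  -- key1 : A part
  have key1 : (∑ q : SDn s x, Amat' s x S mup mdn q) * star (∑ q : SDn s x, Amat' s x S mup mdn q)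
      = ∑ q : SDn s x, Cmat' s x S mup q := by
    rw [star_sum, Finset.sum_mul_sum]
    refine Finset.sum_congr rfl fun q _ => ?_
    rw [Finset.sum_eq_single q]
    · rcases q with ⟨⟨e | v, i⟩, hq⟩
      · simp only [Amat', Cmat']
        rw [star_stdBasisMatrix', Matrix.single_mul_single_same]
      · simp [Amat', Cmat']
    · rintro ⟨⟨f | w, j⟩, hq'⟩ - hne
      · rcases q with ⟨⟨e | v, i⟩, hq⟩
        · simp only [Amat']
          rw [star_stdBasisMatrix', Matrix.single_mul_single_of_ne]
          intro hEq
          exact hne (mdn.injective hEq.symm)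
        · simp [Amat']
      · simp [Amat']
    · intro hq; exact absurd (Finset.mem_univ _) hq
  -- key2 : A * star B = 0
  have key2 : (∑ q : SDn s x, Amat' s x S mup mdn q) * star (∑ q : SUp s x, Bmat' s x S mup mdn q)
      = 0 := by
    rw [star_sum, Finset.sum_mul_sum]
    refine Finset.sum_eq_zero fun q _ => Finset.sum_eq_zero fun q' _ => ?_
    rcases q with ⟨⟨e | v, i⟩, hq⟩ <;> rcases q' with ⟨⟨f | w, j⟩, hq'⟩ <;>
      simp only [Amat', Bmat']
    · rw [star_stdBasisMatrix', Matrix.single_mul_single_of_ne]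
      intro hEq
      simpa using Subtype.ext_iff.mp (mdn.injective hEq)
    · simp
    · simp
    · simp
  -- key3 : B * star A = 0
  have key3 : (∑ q : SUp s x, Bmat' s x S mup mdn q) * star (∑ q : SDn s x, Amat' s x S mup mdn q)
      = 0 := by
    rw [star_sum, Finset.sum_mul_sum]
    refine Finset.sum_eq_zero fun q _ => Finset.sum_eq_zero fun q' _ => ?_
    rcases q with ⟨⟨e | v, i⟩, hq⟩ <;> rcases q' with ⟨⟨f | w, j⟩, hq'⟩ <;>
      simp only [Amat', Bmat']
    · rw [star_stdBasisMatrix', Matrix.single_mul_single_of_ne]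
      intro hEq
      simpa using Subtype.ext_iff.mp (mdn.injective hEq)
    · simp
    · simp
    · simp
  -- key4 : B part
  have key4 : (∑ q : SUp s x, Bmat' s x S mup mdn q) * star (∑ q : SUp s x, Bmat' s x S mup mdn q)
      = ∑ q : SUp s x, R1mat' r s x p mup q := by
    rw [star_sum, Finset.sum_mul_sum]
    refine Finset.sum_congr rfl fun q _ => ?_
    rw [Finset.sum_eq_single q]
    · rcases q with ⟨⟨e | v, i⟩, hq⟩
      · simp only [Bmat', R1mat']
        rw [star_stdBasisMatrix', star_star, Matrix.single_mul_single_same, hCK1]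
      · simp [Bmat', R1mat']
    · rintro ⟨⟨f | w, j⟩, hq'⟩ - hne
      · rcases q with ⟨⟨e | v, i⟩, hq⟩
        · simp only [Bmat']
          rw [star_stdBasisMatrix', star_star]
          by_cases hc : mdn ⟨(Sum.inr (s e), i), hq⟩ = mdn ⟨(Sum.inr (s f), j), hq'⟩
          · rw [hc, Matrix.single_mul_single_same]
            have h2 := mdn.injective hc
            replace h2 := Subtype.ext_iff.mp h2; rw [Prod.mk.injEq] at h2
            have hef : e ≠ f := by
              rintro rfl
              exact hne (by simp [Subtype.mk.injEq, h2.2])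
            rw [hS_orth e f hef, Matrix.single_zero]
          · rw [Matrix.single_mul_single_of_ne (h := hc)]
        · simp [Bmat']
      · simp [Bmat']
    · intro hq; exact absurd (Finset.mem_univ _) hq
  -- key5 : reindexing the A part
  have key5 : (∑ q : SDn s x, Cmat' s x S mup q) = ∑ q : SUp s x, R2mat' s x S mup q := by
    rw [← Finset.sum_fiberwise Finset.univ (piAux s x mup mdn) (Cmat' s x S mup)]
    refine Finset.sum_congr rfl fun q' _ => ?_
    rcases q' with ⟨⟨e | w, i⟩, hq'⟩
    · rw [Finset.sum_eq_zero]
      · simp [R2mat']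
      · rintro ⟨⟨f | v, j⟩, hq⟩ hmem
        · exfalso
          rw [Finset.mem_filter] at hmem
          have := hmem.2
          simp only [piAux] at this
          simpa using Subtype.ext_iff.mp this
        · simp [Cmat']
    · have hmem' : (1:ℤ) ≤ i ∧ i ≤ x w := hq'
      have hxw : x w ≠ 0 := by rcases hmem' with ⟨h1, h2⟩; omega
      have hFin := hemit w hxw
      have hset : {e | s e = w} = ↑hFin.toFinset := (Set.Finite.coe_toFinset _).symm
      simp only [R2mat']
      rw [hset, finsum_mem_coe_finset, stdBasisMatrix_sum']
      rw [← Finset.sum_filter_of_ne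
        (p := fun q : SDn s x => (q : (E ⊕ V) × ℤ).1.isLeft = true) ?side]
      case side =>
        rintro ⟨⟨f | v, j⟩, hq⟩ - hne
        · rfl
        · simp [Cmat'] at hne
      refine Finset.sum_bij'
        (fun q hq => (q : (E ⊕ V) × ℤ).1.getLeft (Finset.mem_filter.mp hq).2)
        (fun e he => (⟨(Sum.inl e, i), ⟨hmem'.1, by
          rw [show s e = w from hFin.mem_toFinset.mp he]; exact hmem'.2⟩⟩ : SDn s x))
        ?_ ?_ ?_ ?_ ?_
      · rintro ⟨⟨f | v, j⟩, hq⟩ hmemq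
        · rw [Set.Finite.mem_toFinset]
          rw [Finset.mem_filter, Finset.mem_filter] at hmemq
          have := hmemq.1.2
          simp only [piAux] at this
          have h2 := Subtype.ext_iff.mp this
          rw [Prod.mk.injEq] at h2
          simpa using Sum.inr.inj h2.1
        · rw [Finset.mem_filter, Finset.mem_filter] at hmemq
          simp at hmemq
      · intro e he
        rw [Finset.mem_filter, Finset.mem_filter]
        refine ⟨⟨Finset.mem_univ _, ?_⟩, rfl⟩
        simp only [piAux]
        exact Subtype.ext (by
          rw [Prod.mk.injEq]
          exact ⟨congrArg Sum.inr (hFin.mem_toFinset.mp he), rfl⟩)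
      · rintro ⟨⟨f | v, j⟩, hq⟩ hmemq
        · rw [Finset.mem_filter, Finset.mem_filter] at hmemq
          have := hmemq.1.2
          simp only [piAux] at this
          have h2 := Subtype.ext_iff.mp this
          rw [Prod.mk.injEq] at h2
          exact Subtype.ext (by rw [Prod.mk.injEq]; exact ⟨rfl, h2.2.symm⟩)
        · rw [Finset.mem_filter, Finset.mem_filter] at hmemq
          simp at hmemq
      · intro e he
        rfl
      · rintro ⟨⟨f | v, j⟩, hq⟩ hmemq
        · rw [Finset.mem_filter, Finset.mem_filter] at hmemq
          have := hmemq.1.2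
          simp only [piAux] at this
          have h2 := Subtype.ext_iff.mp this
          rw [Prod.mk.injEq] at h2
          have hqq : (⟨(Sum.inr (s f), j), hq⟩ : SUp s x) = ⟨(Sum.inr w, i), hq'⟩ := by
            exact Subtype.ext (by rw [Prod.mk.injEq]; exact ⟨h2.1, h2.2⟩)
          simp only [Cmat']
          rw [hqq]
          rfl
        · rw [Finset.mem_filter, Finset.mem_filter] at hmemq
          simp at hmemq
  -- splitting the RHS
  have hsplit : ∀ q : SUp s x,
      Matrix.single (mup q) (mup q)
        (match q.1.1 with
         | Sum.inl e => p (r e)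
         | Sum.inr w => ∑ᶠ e ∈ {e | s e = w}, S e * star (S e))
      = R1mat' r s x p mup q + R2mat' s x S mup q := by
    rintro ⟨⟨e | w, i⟩, hq⟩ <;> simp [R1mat', R2mat']
  calc Vmat s x S mup mdn * star (Vmat s x S mup mdn)
      = (∑ q : SDn s x, Amat' s x S mup mdn q) * star (∑ q : SDn s x, Amat' s x S mup mdn q)
        + (∑ q : SUp s x, Bmat' s x S mup mdn q) * star (∑ q : SDn s x, Amat' s x S mup mdn q)
        + ((∑ q : SDn s x, Amat' s x S mup mdn q) * star (∑ q : SUp s x, Bmat' s x S mup mdn q)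
        + (∑ q : SUp s x, Bmat' s x S mup mdn q) * star (∑ q : SUp s x, Bmat' s x S mup mdn q)) := by
        rw [hV, star_add, mul_add, add_mul, add_mul]
    _ = (∑ q : SUp s x, R1mat' r s x p mup q) + (∑ q : SUp s x, R2mat' s x S mup q) := by
        rw [key1, key2, key3, key4, key5, add_zero, zero_add, add_comm]
    _ = ∑ q : SUp s x, (R1mat' r s x p mup q + R2mat' s x S mup q) := by
        rw [Finset.sum_add_distrib]
    _ = _ := by
        exact (Finset.sum_congr rfl fun q _ => (hsplit q).symm)
end

section
/- With notation as in the context, V*V = ∑_{w ∈ E⁰, 1≤i≤−x_w, e ∈ E¹ with s(e)=w} (s_e s_e*)·E_{m↓(w,i),m↓(w,i)} + ∑_{w ∈ E⁰, 1≤i≤x_w, e ∈ E¹ with s(e)=w} p_{r(e)}·E_{m↓(e,i),m↓(e,i)}. -/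
open scoped Matrix

private lemma sbm_conjT {n A : Type*} [DecidableEq n] [AddMonoid A] [StarAddMonoid A]
    (i j : n) (a : A) :
    (Matrix.single i j a)ᴴ = Matrix.single j i (star a) := by
  ext k l
  simp only [Matrix.conjTranspose_apply, Matrix.single, Matrix.of_apply]
  by_cases hc : j = k ∧ i = l
  · rw [if_pos ⟨hc.2, hc.1⟩, if_pos hc]
  · rw [if_neg (fun hh => hc ⟨hh.2, hh.1⟩), if_neg hc, star_zero]

private lemma sbm_sum {n A ι : Type*} [DecidableEq n] [AddCommMonoid A]
    (i j : n) (t : Finset ι) (f : ι → A) :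
    Matrix.single i j (∑ e ∈ t, f e) = ∑ e ∈ t, Matrix.single i j (f e) := by
  classical
  induction t using Finset.induction_on with
  | empty => simp
  | insert _ _ hnot ih =>
      rw [Finset.sum_insert hnot, Finset.sum_insert hnot, Matrix.single_add, ih]

theorem stmt8 {V E A : Type*} [Countable V] [Countable E] [NonUnitalCStarAlgebra A]
    (r s : E → V) (p : V → A) (S : E → A)
    (hp_star : ∀ v, star (p v) = p v)
    (hp_idem : ∀ v, p v * p v = p v)
    (hp_orth : ∀ v w, v ≠ w → p v * p w = 0)
    (hCK1 : ∀ e, star (S e) * S e = p (r e))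
    (hS_orth : ∀ e f, e ≠ f → star (S e) * S f = 0)
    (hCK3 : ∀ e, p (s e) * S e = S e)
    (x : V → ℤ) (hsupp : {v | x v ≠ 0}.Finite)
    (hemit : ∀ v, x v ≠ 0 → {e | s e = v}.Finite)
    (hker : ∀ v, ∑ᶠ e ∈ {e | r e = v}, x (s e) = x v)
    {h : ℕ} [Fintype (SUp s x)] [Fintype (SDn s x)]
    (mup : SUp s x ≃ Fin h) (mdn : SDn s x ≃ Fin h)
    (hcomp : ∀ (q : SUp s x) (q' : SDn s x), mup q = mdn q' → rext r q.1.1 = rext r q'.1.1) :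
    star (Vmat s x S mup mdn) * Vmat s x S mup mdn =
      ∑ q : SDn s x, Matrix.single (mdn q) (mdn q)
        (match q.1.1 with
         | Sum.inl e => p (r e)
         | Sum.inr w => ∑ᶠ e ∈ {e | s e = w}, S e * star (S e)) := by
  classical
  set T1 : SDn s x → Matrix (Fin h) (Fin h) A := fun q =>
    match q with
    | ⟨(Sum.inl e, i), hq⟩ =>
        Matrix.single (mup ⟨(Sum.inr (s e), i), hq⟩) (mdn ⟨(Sum.inl e, i), hq⟩) (S e)
    | ⟨(Sum.inr _, _), _⟩ => 0 with hT1
  set T2 : SUp s x → Matrix (Fin h) (Fin h) A := fun q =>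
    match q with
    | ⟨(Sum.inl e, i), hq⟩ =>
        Matrix.single (mup ⟨(Sum.inl e, i), hq⟩) (mdn ⟨(Sum.inr (s e), i), hq⟩) (star (S e))
    | ⟨(Sum.inr _, _), _⟩ => 0 with hT2
  have hV : Vmat s x S mup mdn = (∑ q : SDn s x, T1 q) + (∑ q : SUp s x, T2 q) := rfl
  -- cross terms vanish
  have h12 : (∑ q : SDn s x, (T1 q)ᴴ) * (∑ q : SUp s x, T2 q) = 0 := by
    rw [Fintype.sum_mul_sum]
    refine Finset.sum_eq_zero fun q _ => Finset.sum_eq_zero fun q' _ => ?_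
    obtain ⟨⟨y, i⟩, hq⟩ := q
    obtain ⟨⟨y', j⟩, hq'⟩ := q'
    cases y with
    | inr w => simp [hT1]
    | inl e =>
      cases y' with
      | inr w => simp [hT2]
      | inl f =>
        show (Matrix.single (mup ⟨(Sum.inr (s e), i), hq⟩)
              (mdn ⟨(Sum.inl e, i), hq⟩) (S e))ᴴ *
            Matrix.single (mup ⟨(Sum.inl f, j), hq'⟩)
              (mdn ⟨(Sum.inr (s f), j), hq'⟩) (star (S f)) = 0
        rw [sbm_conjT]
        refine Matrix.single_mul_single_of_ne _ _ _ _ ?_ _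
        intro hc
        have := mup.injective hc
        simp [Subtype.ext_iff, Prod.ext_iff] at this
  have h21 : (∑ q : SUp s x, (T2 q)ᴴ) * (∑ q : SDn s x, T1 q) = 0 := by
    rw [Fintype.sum_mul_sum]
    refine Finset.sum_eq_zero fun q _ => Finset.sum_eq_zero fun q' _ => ?_
    obtain ⟨⟨y, i⟩, hq⟩ := q
    obtain ⟨⟨y', j⟩, hq'⟩ := q'
    cases y with
    | inr w => simp [hT2]
    | inl e =>
      cases y' with
      | inr w => simp [hT1]
      | inl f =>
        show (Matrix.single (mup ⟨(Sum.inl e, i), hq⟩)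
              (mdn ⟨(Sum.inr (s e), i), hq⟩) (star (S e)))ᴴ *
            Matrix.single (mup ⟨(Sum.inr (s f), j), hq'⟩)
              (mdn ⟨(Sum.inl f, j), hq'⟩) (S f) = 0
        rw [sbm_conjT]
        refine Matrix.single_mul_single_of_ne _ _ _ _ ?_ _
        intro hc
        have := mup.injective hc
        simp [Subtype.ext_iff, Prod.ext_iff] at this
  -- first diagonal block
  have h11 : (∑ q : SDn s x, (T1 q)ᴴ) * (∑ q : SDn s x, T1 q)
      = ∑ q : SDn s x, Matrix.single (mdn q) (mdn q)
          (match q.1.1 with | Sum.inl e => p (r e) | Sum.inr _ => 0) := by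
    rw [Fintype.sum_mul_sum]
    refine Finset.sum_congr rfl fun q _ => ?_
    rw [Finset.sum_eq_single q]
    · obtain ⟨⟨y, i⟩, hq⟩ := q
      cases y with
      | inr w => simp [hT1]
      | inl e =>
        show (Matrix.single (mup ⟨(Sum.inr (s e), i), hq⟩)
              (mdn ⟨(Sum.inl e, i), hq⟩) (S e))ᴴ *
            Matrix.single (mup ⟨(Sum.inr (s e), i), hq⟩)
              (mdn ⟨(Sum.inl e, i), hq⟩) (S e)
            = Matrix.single (mdn ⟨(Sum.inl e, i), hq⟩)
                (mdn ⟨(Sum.inl e, i), hq⟩) (p (r e))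
        rw [sbm_conjT, Matrix.single_mul_single_same, hCK1]
    · intro q' _ hne
      obtain ⟨⟨y, i⟩, hq⟩ := q
      obtain ⟨⟨y', j⟩, hq'⟩ := q'
      cases y with
      | inr w => simp [hT1]
      | inl e =>
        cases y' with
        | inr w => simp [hT2, hT1]
        | inl f =>
          show (Matrix.single (mup ⟨(Sum.inr (s e), i), hq⟩)
                (mdn ⟨(Sum.inl e, i), hq⟩) (S e))ᴴ *
              Matrix.single (mup ⟨(Sum.inr (s f), j), hq'⟩)
                (mdn ⟨(Sum.inl f, j), hq'⟩) (S f) = 0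
          rw [sbm_conjT]
          by_cases hc : mup ⟨(Sum.inr (s e), i), hq⟩ = mup ⟨(Sum.inr (s f), j), hq'⟩
          · have h2 := mup.injective hc
            have h3 : s e = s f ∧ i = j := by
              have := congrArg Subtype.val h2
              simpa [Prod.ext_iff] using this
            have hef : e ≠ f := by
              rintro rfl
              exact hne (by cases h3.2; rfl)
            rw [hc, Matrix.single_mul_single_same, hS_orth e f hef,
              Matrix.single_zero]
          · exact Matrix.single_mul_single_of_ne _ _ _ _ hc _
    · intro hq; exact absurd (Finset.mem_univ q) hq

  -- second diagonal block
  set F : SUp s x → Matrix (Fin h) (Fin h) A := fun q =>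
    match q with
    | ⟨(Sum.inl e, i), hq⟩ =>
        Matrix.single (mdn ⟨(Sum.inr (s e), i), hq⟩) (mdn ⟨(Sum.inr (s e), i), hq⟩)
          (S e * star (S e))
    | ⟨(Sum.inr _, _), _⟩ => 0 with hF
  have h22 : (∑ q : SUp s x, (T2 q)ᴴ) * (∑ q : SUp s x, T2 q) = ∑ q : SUp s x, F q := by
    rw [Fintype.sum_mul_sum]
    refine Finset.sum_congr rfl fun q _ => ?_
    rw [Finset.sum_eq_single q]
    · obtain ⟨⟨y, i⟩, hq⟩ := q
      cases y with
      | inr w => simp [hT2, hF]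
      | inl e =>
        show (Matrix.single (mup ⟨(Sum.inl e, i), hq⟩)
              (mdn ⟨(Sum.inr (s e), i), hq⟩) (star (S e)))ᴴ *
            Matrix.single (mup ⟨(Sum.inl e, i), hq⟩)
              (mdn ⟨(Sum.inr (s e), i), hq⟩) (star (S e))
            = Matrix.single (mdn ⟨(Sum.inr (s e), i), hq⟩)
                (mdn ⟨(Sum.inr (s e), i), hq⟩) (S e * star (S e))
        rw [sbm_conjT, Matrix.single_mul_single_same, star_star]
    · intro q' _ hne
      obtain ⟨⟨y, i⟩, hq⟩ := q
      obtain ⟨⟨y', j⟩, hq'⟩ := q'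
      cases y with
      | inr w => simp [hT2]
      | inl e =>
        cases y' with
        | inr w => simp [hT2]
        | inl f =>
          show (Matrix.single (mup ⟨(Sum.inl e, i), hq⟩)
                (mdn ⟨(Sum.inr (s e), i), hq⟩) (star (S e)))ᴴ *
              Matrix.single (mup ⟨(Sum.inl f, j), hq'⟩)
                (mdn ⟨(Sum.inr (s f), j), hq'⟩) (star (S f)) = 0
          rw [sbm_conjT]
          refine Matrix.single_mul_single_of_ne _ _ _ _ ?_ _
          intro hc
          exact hne (mup.injective hc.symm)
    · intro hq; exact absurd (Finset.mem_univ q) hq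
  -- reindexing of the second block
  set fse : V → Finset E := fun w =>
    if hw : Set.Finite {e | s e = w} then hw.toFinset else ∅ with hfse
  have hfse_mem : ∀ w, x w ≠ 0 → ∀ e, (e ∈ fse w ↔ s e = w) := by
    intro w hw e
    rw [hfse]
    simp only [dif_pos (hemit w hw)]
    exact (hemit w hw).mem_toFinset
  set sfs : SDn s x → Finset E := fun q =>
    match q.1.1 with
    | Sum.inl _ => (∅ : Finset E)
    | Sum.inr w => fse w with hsfs
  have hxw : ∀ (w : V) (i : ℤ), 1 ≤ i → i ≤ -x w → x w ≠ 0 := by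
    intro w i h1 h2 h0
    rw [h0] at h2
    omega
  have hreidx : ∑ q : SUp s x, F q
      = ∑ q : SDn s x, ∑ e ∈ sfs q,
          Matrix.single (mdn q) (mdn q) (S e * star (S e)) := by
    rw [Finset.sum_sigma']
    rw [← Finset.sum_filter_of_ne
      (p := fun q : SUp s x => (q.1.1.isLeft : Bool) = true)
      (fun q _ hFq => by
        obtain ⟨⟨y, i⟩, hq⟩ := q
        cases y with
        | inl e => rfl
        | inr w => exact absurd rfl hFq)]
    refine (Finset.sum_bij (fun (a : (_ : SDn s x) × E) (ha : a ∈ Finset.univ.sigma sfs) =>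
        (⟨(Sum.inl a.2, a.1.1.2), ?_⟩ : SUp s x)) ?_ ?_ ?_ ?_).symm
    · -- membership in SUp
      obtain ⟨⟨⟨y, i⟩, hq⟩, e⟩ := a
      rw [Finset.mem_sigma] at ha
      cases y with
      | inl f => exact absurd ha.2 (by simp [hsfs])
      | inr w =>
        have h12' : 1 ≤ i ∧ i ≤ -x w := hq
        have hsw : s e = w :=
          (hfse_mem w (hxw w i h12'.1 h12'.2) e).mp (by simpa [hsfs] using ha.2)
        exact ⟨h12'.1, by rw [hsw]; exact h12'.2⟩
    · -- maps into the filter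
      rintro ⟨⟨⟨y, i⟩, hq⟩, e⟩ ha
      simp [Finset.mem_filter]
    · -- injectivity
      rintro ⟨⟨⟨y₁, i₁⟩, hq₁⟩, e₁⟩ ha₁ ⟨⟨⟨y₂, i₂⟩, hq₂⟩, e₂⟩ ha₂ hEq
      rw [Finset.mem_sigma] at ha₁ ha₂
      cases y₁ with
      | inl f => exact absurd ha₁.2 (by simp [hsfs])
      | inr w₁ =>
        cases y₂ with
        | inl f => exact absurd ha₂.2 (by simp [hsfs])
        | inr w₂ =>
          have hv := congrArg Subtype.val hEq
          simp only [Prod.ext_iff, Sum.inl.injEq] at hv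
          obtain ⟨he, hi⟩ := hv
          have h12' : 1 ≤ i₁ ∧ i₁ ≤ -x w₁ := hq₁
          have h12'' : 1 ≤ i₂ ∧ i₂ ≤ -x w₂ := hq₂
          have hs₁ : s e₁ = w₁ :=
            (hfse_mem w₁ (hxw w₁ i₁ h12'.1 h12'.2) e₁).mp (by simpa [hsfs] using ha₁.2)
          have hs₂ : s e₂ = w₂ :=
            (hfse_mem w₂ (hxw w₂ i₂ h12''.1 h12''.2) e₂).mp (by simpa [hsfs] using ha₂.2)
          subst he hi
          have hww : w₁ = w₂ := by rw [← hs₁, ← hs₂]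
          subst hww
          rfl
    · -- surjectivity
      rintro ⟨⟨y, i⟩, hb⟩ hbf
      rw [Finset.mem_filter] at hbf
      cases y with
      | inr w => simp at hbf
      | inl e =>
        have hb' : 1 ≤ i ∧ i ≤ -x (s e) := hb
        have hq : ((Sum.inr (s e) : E ⊕ V), i) ∈ SDn s x := hb'
        refine ⟨⟨⟨(Sum.inr (s e), i), hq⟩, e⟩, ?_, rfl⟩
        rw [Finset.mem_sigma]
        refine ⟨Finset.mem_univ _, ?_⟩
        have : e ∈ fse (s e) := (hfse_mem (s e) (hxw _ i hb'.1 hb'.2) e).mpr rfl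
        simpa [hsfs] using this
    · -- equal summands
      rintro ⟨⟨⟨y, i⟩, hq⟩, e⟩ ha
      rw [Finset.mem_sigma] at ha
      cases y with
      | inl f => exact absurd ha.2 (by simp [hsfs])
      | inr w =>
        have h12' : 1 ≤ i ∧ i ≤ -x w := hq
        have hsw : s e = w :=
          (hfse_mem w (hxw w i h12'.1 h12'.2) e).mp (by simpa [hsfs] using ha.2)
        subst hsw
        rfl
  -- assemble everything
  rw [hV, Matrix.star_eq_conjTranspose, Matrix.conjTranspose_add, Matrix.conjTranspose_sum,
    Matrix.conjTranspose_sum, add_mul, mul_add, mul_add, h12, h21, h11, h22, hreidx,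
    add_zero, zero_add, ← Finset.sum_add_distrib]
  refine Finset.sum_congr rfl fun q _ => ?_
  obtain ⟨⟨y, i⟩, hq⟩ := q
  cases y with
  | inl e => simp [hsfs]
  | inr w =>
    have h12' : 1 ≤ i ∧ i ≤ -x w := hq
    have hw : x w ≠ 0 := hxw w i h12'.1 h12'.2
    have hfw : fse w = (hemit w hw).toFinset := by rw [hfse]; exact dif_pos (hemit w hw)
    have hfin : (∑ᶠ e ∈ {e | s e = w}, S e * star (S e)) = ∑ e ∈ fse w, S e * star (S e) := by
      rw [hfw, ← finsum_mem_coe_finset, (hemit w hw).coe_toFinset]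
    dsimp only [hsfs]
    rw [hfin, sbm_sum, Matrix.single_zero, zero_add]
end

section
/- With notation as in the context, PV = V and VP = V in M_h(A). -/
section helpers
variable {A : Type*}

lemma diag_mul_std [NonUnitalNonAssocSemiring A] {n : ℕ} {ι : Type*} [Fintype ι]
    (f : ι ≃ Fin n) (g : ι → A) (q : ι) (k : Fin n) (a : A) :
    (∑ q' : ι, Matrix.single (f q') (f q') (g q')) * Matrix.single (f q) k a
      = Matrix.single (f q) k (g q * a) := by
  rw [Finset.sum_mul, Finset.sum_eq_single q]
  · exact Matrix.single_mul_single_same _ _ _ _ _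
  · intro q' _ hne
    exact Matrix.single_mul_single_of_ne _ _ _ _ (fun h => hne (f.injective h)) _
  · simp

lemma std_mul_diag [NonUnitalNonAssocSemiring A] {n : ℕ} {ι : Type*} [Fintype ι]
    (f : ι ≃ Fin n) (g : ι → A) (q : ι) (j : Fin n) (a : A) :
    Matrix.single j (f q) a * (∑ q' : ι, Matrix.single (f q') (f q') (g q'))
      = Matrix.single j (f q) (a * g q) := by
  rw [Finset.mul_sum, Finset.sum_eq_single q]
  · exact Matrix.single_mul_single_same _ _ _ _ _
  · intro q' _ hne
    exact Matrix.single_mul_single_of_ne _ _ _ _ (fun h => hne (f.injective h.symm)) _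
  · simp

lemma partial_iso [NonUnitalCStarAlgebra A] (a : A)
    (h : (star a * a) * (star a * a) = star a * a) : a * (star a * a) = a := by
  have hz : star (a * (star a * a) - a) * (a * (star a * a) - a) = 0 := by
    have expand : star (a * (star a * a) - a) * (a * (star a * a) - a)
        = (star a * a) * (star a * a) * (star a * a)
          - (star a * a) * (star a * a) - (star a * a) * (star a * a) + star a * a := by
      simp only [star_sub, star_mul, star_star]
      noncomm_ring
    rw [expand, h, h]
    abel
  exact sub_eq_zero.mp ((CStarRing.star_mul_self_eq_zero_iff _).mp hz)
end helpers

theorem stmt10 {V E A : Type*} [Countable V] [Countable E] [NonUnitalCStarAlgebra A]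
    (r s : E → V) (p : V → A) (S : E → A)
    (hp_star : ∀ v, star (p v) = p v)
    (hp_idem : ∀ v, p v * p v = p v)
    (hp_orth : ∀ v w, v ≠ w → p v * p w = 0)
    (hCK1 : ∀ e, star (S e) * S e = p (r e))
    (hS_orth : ∀ e f, e ≠ f → star (S e) * S f = 0)
    (hCK3 : ∀ e, p (s e) * S e = S e)
    (x : V → ℤ) (hsupp : {v | x v ≠ 0}.Finite)
    (hemit : ∀ v, x v ≠ 0 → {e | s e = v}.Finite)
    (hker : ∀ v, ∑ᶠ e ∈ {e | r e = v}, x (s e) = x v)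
    {h : ℕ} [Fintype (SUp s x)] [Fintype (SDn s x)]
    (mup : SUp s x ≃ Fin h) (mdn : SDn s x ≃ Fin h)
    (hcomp : ∀ (q : SUp s x) (q' : SDn s x), mup q = mdn q' → rext r q.1.1 = rext r q'.1.1) :
    Pmat r s x p mup * Vmat s x S mup mdn = Vmat s x S mup mdn ∧
      Vmat s x S mup mdn * Pmat r s x p mup = Vmat s x S mup mdn := by
  classical
  have hSp : ∀ e, S e * p (r e) = S e := by
    intro e
    have hh : (star (S e) * S e) * (star (S e) * S e) = star (S e) * S e := by
      rw [hCK1]; exact hp_idem _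
    have := partial_iso (S e) hh
    rwa [hCK1] at this
  have hpS : ∀ e, p (r e) * star (S e) = star (S e) := by
    intro e
    rw [← hp_star (r e), ← star_mul, hSp]
  have hstarP : ∀ e, star (S e) * p (s e) = star (S e) := by
    intro e
    rw [← hp_star (s e), ← star_mul, hCK3]
  constructor
  · unfold Pmat Vmat
    rw [mul_add, Finset.mul_sum, Finset.mul_sum]
    congr 1
    · apply Finset.sum_congr rfl
      rintro ⟨⟨e | v, i⟩, hq⟩ -
      · show (∑ q' : SUp s x, Matrix.single (mup q') (mup q') (p (rext r q'.1.1))) *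
            Matrix.single (mup ⟨(Sum.inr (s e), i), hq⟩) (mdn ⟨(Sum.inl e, i), hq⟩) (S e)
          = Matrix.single (mup ⟨(Sum.inr (s e), i), hq⟩) (mdn ⟨(Sum.inl e, i), hq⟩) (S e)
        rw [diag_mul_std mup (fun q' => p (rext r q'.1.1)) ⟨(Sum.inr (s e), i), hq⟩]
        show Matrix.single _ _ (p (s e) * S e) = _
        rw [hCK3]
      · show (∑ q' : SUp s x, Matrix.single (mup q') (mup q') (p (rext r q'.1.1))) *
            (0 : Matrix (Fin h) (Fin h) A) = 0
        rw [mul_zero]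
    · apply Finset.sum_congr rfl
      rintro ⟨⟨e | v, i⟩, hq⟩ -
      · show (∑ q' : SUp s x, Matrix.single (mup q') (mup q') (p (rext r q'.1.1))) *
            Matrix.single (mup ⟨(Sum.inl e, i), hq⟩) (mdn ⟨(Sum.inr (s e), i), hq⟩)
              (star (S e))
          = Matrix.single (mup ⟨(Sum.inl e, i), hq⟩) (mdn ⟨(Sum.inr (s e), i), hq⟩)
              (star (S e))
        rw [diag_mul_std mup (fun q' => p (rext r q'.1.1)) ⟨(Sum.inl e, i), hq⟩]
        show Matrix.single _ _ (p (r e) * star (S e)) = _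
        rw [hpS]
      · show (∑ q' : SUp s x, Matrix.single (mup q') (mup q') (p (rext r q'.1.1))) *
            (0 : Matrix (Fin h) (Fin h) A) = 0
        rw [mul_zero]
  · unfold Pmat Vmat
    rw [add_mul, Finset.sum_mul, Finset.sum_mul]
    congr 1
    · apply Finset.sum_congr rfl
      rintro ⟨⟨e | v, i⟩, hq⟩ -
      · set c : SDn s x := ⟨(Sum.inl e, i), hq⟩ with hc
        show Matrix.single (mup ⟨(Sum.inr (s e), i), hq⟩) (mdn c) (S e) *
            (∑ q' : SUp s x, Matrix.single (mup q') (mup q') (p (rext r q'.1.1)))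
          = Matrix.single (mup ⟨(Sum.inr (s e), i), hq⟩) (mdn c) (S e)
        rw [show mdn c = mup (mup.symm (mdn c)) from (mup.apply_symm_apply _).symm]
        rw [std_mul_diag mup (fun q' => p (rext r q'.1.1)) (mup.symm (mdn c))]
        have hr : rext r (mup.symm (mdn c)).1.1 = r e :=
          hcomp (mup.symm (mdn c)) c (mup.apply_symm_apply _)
        show Matrix.single _ _ (S e * p (rext r (mup.symm (mdn c)).1.1)) = _
        rw [hr, hSp]
      · show (0 : Matrix (Fin h) (Fin h) A) *
            (∑ q' : SUp s x, Matrix.single (mup q') (mup q') (p (rext r q'.1.1))) = 0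
        rw [zero_mul]
    · apply Finset.sum_congr rfl
      rintro ⟨⟨e | v, i⟩, hq⟩ -
      · set c : SDn s x := ⟨(Sum.inr (s e), i), hq⟩ with hc
        show Matrix.single (mup ⟨(Sum.inl e, i), hq⟩) (mdn c) (star (S e)) *
            (∑ q' : SUp s x, Matrix.single (mup q') (mup q') (p (rext r q'.1.1)))
          = Matrix.single (mup ⟨(Sum.inl e, i), hq⟩) (mdn c) (star (S e))
        rw [show mdn c = mup (mup.symm (mdn c)) from (mup.apply_symm_apply _).symm]
        rw [std_mul_diag mup (fun q' => p (rext r q'.1.1)) (mup.symm (mdn c))]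
        have hr : rext r (mup.symm (mdn c)).1.1 = s e :=
          hcomp (mup.symm (mdn c)) c (mup.apply_symm_apply _)
        show Matrix.single _ _ (star (S e) * p (rext r (mup.symm (mdn c)).1.1)) = _
        rw [hr, hstarP]
      · show (0 : Matrix (Fin h) (Fin h) A) *
            (∑ q' : SUp s x, Matrix.single (mup q') (mup q') (p (rext r q'.1.1))) = 0
        rw [zero_mul]
end

section
/- With notation as in the context, assume additionally that p_w = ∑_{e ∈ s⁻¹(w)} s_e s_e* for every vertex w with x_w ≠ 0 (the relative Cuntz–Krieger relation on the support of x). Then VV* = P. -/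
open scoped Matrix Classical

section Aux

variable {V E A : Type*} [NonUnitalNonAssocSemiring A] [StarRing A]
  (r : E → V) (s : E → V) (x : V → ℤ) (S : E → A) (p : V → A) {h : ℕ}
  [Fintype (SUp s x)] [Fintype (SDn s x)]
  (mup : SUp s x ≃ Fin h) (mdn : SDn s x ≃ Fin h)

/-- conjTranspose of a standard basis matrix. -/
lemma stdBM_conjT {m n α : Type*} [DecidableEq m] [DecidableEq n] [AddMonoid α] [StarAddMonoid α] (i : m) (j : n) (a : α) :
    (Matrix.single i j a)ᴴ = Matrix.single j i (star a) := by
  ext b c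
  simp only [Matrix.conjTranspose_apply, Matrix.single, Matrix.of_apply]
  by_cases h1 : i = c <;> by_cases h2 : j = b <;> simp [h1, h2]

lemma stdBM_sum {m n α ι : Type*} [DecidableEq m] [DecidableEq n] [AddCommMonoid α] (i : m) (j : n) (t : Finset ι) (f : ι → α) :
    Matrix.single i j (∑ e ∈ t, f e) = ∑ e ∈ t, Matrix.single i j (f e) := by
  classical
  induction t using Finset.induction with
  | empty => simp
  | insert _ _ hnot ih =>
      rw [Finset.sum_insert hnot, Finset.sum_insert hnot, Matrix.single_add, ih]

noncomputable def fA (q : SDn s x) : Matrix (Fin h) (Fin h) A :=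
  match q with
  | ⟨(Sum.inl e, i), hq⟩ =>
      Matrix.single (mup ⟨(Sum.inr (s e), i), hq⟩) (mdn ⟨(Sum.inl e, i), hq⟩) (S e)
  | ⟨(Sum.inr _, _), _⟩ => 0

noncomputable def fB (q : SUp s x) : Matrix (Fin h) (Fin h) A :=
  match q with
  | ⟨(Sum.inl e, i), hq⟩ =>
      Matrix.single (mup ⟨(Sum.inl e, i), hq⟩) (mdn ⟨(Sum.inr (s e), i), hq⟩) (star (S e))
  | ⟨(Sum.inr _, _), _⟩ => 0

noncomputable def gA (q : SDn s x) : Matrix (Fin h) (Fin h) A :=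
  match q with
  | ⟨(Sum.inl e, i), hq⟩ =>
      Matrix.single (mup ⟨(Sum.inr (s e), i), hq⟩) (mup ⟨(Sum.inr (s e), i), hq⟩)
        (S e * star (S e))
  | ⟨(Sum.inr _, _), _⟩ => 0

noncomputable def gB (q : SUp s x) : Matrix (Fin h) (Fin h) A :=
  match q with
  | ⟨(Sum.inl e, i), hq⟩ =>
      Matrix.single (mup ⟨(Sum.inl e, i), hq⟩) (mup ⟨(Sum.inl e, i), hq⟩)
        (star (S e) * S e)
  | ⟨(Sum.inr _, _), _⟩ => 0

noncomputable def gC (q : SUp s x) : Matrix (Fin h) (Fin h) A :=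
  match q with
  | ⟨(Sum.inl _, _), _⟩ => 0
  | ⟨(Sum.inr w, i), hq⟩ =>
      Matrix.single (mup ⟨(Sum.inr w, i), hq⟩) (mup ⟨(Sum.inr w, i), hq⟩) (p w)

noncomputable def g2 (q : SDn s x) (q' : SUp s x) : Matrix (Fin h) (Fin h) A :=
  match q, q' with
  | ⟨(Sum.inl e, i), _⟩, ⟨(Sum.inr w, j), hq'⟩ =>
      if s e = w ∧ i = j then
        Matrix.single (mup ⟨(Sum.inr w, j), hq'⟩) (mup ⟨(Sum.inr w, j), hq'⟩)
          (S e * star (S e))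
      else 0
  | _, _ => 0

lemma Vmat_eq : Vmat s x S mup mdn = (∑ q, fA s x S mup mdn q) + ∑ q, fB s x S mup mdn q := rfl

end Aux

theorem stmt11 {V E A : Type*} [Countable V] [Countable E] [NonUnitalCStarAlgebra A]
    (r s : E → V) (p : V → A) (S : E → A)
    (hp_star : ∀ v, star (p v) = p v)
    (hp_idem : ∀ v, p v * p v = p v)
    (hp_orth : ∀ v w, v ≠ w → p v * p w = 0)
    (hCK1 : ∀ e, star (S e) * S e = p (r e))
    (hS_orth : ∀ e f, e ≠ f → star (S e) * S f = 0)
    (hCK3 : ∀ e, p (s e) * S e = S e)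
    (x : V → ℤ) (hsupp : {v | x v ≠ 0}.Finite)
    (hemit : ∀ v, x v ≠ 0 → {e | s e = v}.Finite)
    (hker : ∀ v, ∑ᶠ e ∈ {e | r e = v}, x (s e) = x v)
    {h : ℕ} [Fintype (SUp s x)] [Fintype (SDn s x)]
    (mup : SUp s x ≃ Fin h) (mdn : SDn s x ≃ Fin h)
    (hcomp : ∀ (q : SUp s x) (q' : SDn s x), mup q = mdn q' → rext r q.1.1 = rext r q'.1.1)
    (hRCK : ∀ w, x w ≠ 0 → p w = ∑ᶠ e ∈ {e | s e = w}, S e * star (S e)) :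
    Vmat s x S mup mdn * star (Vmat s x S mup mdn) = Pmat r s x p mup := by
  classical
  rw [Vmat_eq]
  rw [Matrix.star_eq_conjTranspose, Matrix.conjTranspose_add, add_mul, mul_add, mul_add]
  -- the two cross terms vanish
  have hAB : (∑ q, fA s x S mup mdn q) * (∑ q, fB s x S mup mdn q)ᴴ = 0 := by
    rw [Matrix.conjTranspose_sum, Finset.sum_mul_sum]
    apply Finset.sum_eq_zero
    rintro ⟨⟨y, i⟩, hq⟩ -
    apply Finset.sum_eq_zero
    rintro ⟨⟨y', j⟩, hq'⟩ -
    rcases y with e | v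
    · rcases y' with f | w
      · simp only [fA, fB, stdBM_conjT]
        apply Matrix.single_mul_single_of_ne
        intro hEq
        have := mdn.injective hEq
        have h2 := congrArg (fun q : SDn s x => q.1.1) this
        simp at h2
      · simp [fB]
    · simp [fA]
  have hBA : (∑ q, fB s x S mup mdn q) * (∑ q, fA s x S mup mdn q)ᴴ = 0 := by
    rw [Matrix.conjTranspose_sum, Finset.sum_mul_sum]
    apply Finset.sum_eq_zero
    rintro ⟨⟨y, i⟩, hq⟩ -
    apply Finset.sum_eq_zero
    rintro ⟨⟨y', j⟩, hq'⟩ -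
    rcases y with e | v
    · rcases y' with f | w
      · simp only [fA, fB, stdBM_conjT]
        apply Matrix.single_mul_single_of_ne
        intro hEq
        have := mdn.injective hEq
        have h2 := congrArg (fun q : SDn s x => q.1.1) this
        simp at h2
      · simp [fA]
    · simp [fB]
  -- the AA* term
  have hAA : (∑ q, fA s x S mup mdn q) * (∑ q, fA s x S mup mdn q)ᴴ
      = ∑ q, gA s x S mup q := by
    rw [Matrix.conjTranspose_sum, Finset.sum_mul_sum]
    apply Finset.sum_congr rfl
    rintro ⟨⟨y, i⟩, hq⟩ -
    rcases y with e | v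
    · rw [Fintype.sum_eq_single (⟨(Sum.inl e, i), hq⟩ : SDn s x)]
      · simp only [fA, gA, stdBM_conjT, Matrix.single_mul_single_same]
      · rintro ⟨⟨y', j⟩, hq'⟩ hne
        rcases y' with f | w
        · simp only [fA, stdBM_conjT]
          apply Matrix.single_mul_single_of_ne
          intro hEq
          exact hne (mdn.injective hEq.symm)
        · simp [fA]
    · apply Finset.sum_eq_zero
      rintro q' -
      simp [fA]
  -- the BB* term
  have hBB : (∑ q, fB s x S mup mdn q) * (∑ q, fB s x S mup mdn q)ᴴ
      = ∑ q, gB s x S mup q := by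
    rw [Matrix.conjTranspose_sum, Finset.sum_mul_sum]
    apply Finset.sum_congr rfl
    rintro ⟨⟨y, i⟩, hq⟩ -
    rcases y with e | v
    · rw [Fintype.sum_eq_single (⟨(Sum.inl e, i), hq⟩ : SUp s x)]
      · simp only [fB, gB, stdBM_conjT, star_star, Matrix.single_mul_single_same]
      · rintro ⟨⟨y', j⟩, hq'⟩ hne
        rcases y' with f | w
        · simp only [fB, stdBM_conjT, star_star]
          by_cases hm : (mdn ⟨(Sum.inr (s e), i), hq⟩ : Fin h) = mdn ⟨(Sum.inr (s f), j), hq'⟩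
          · have hinj := mdn.injective hm
            replace hinj := congrArg (fun q : SDn s x => q.1) hinj
            simp only [Subtype.mk.injEq, Prod.mk.injEq, Sum.inr.injEq] at hinj
            obtain ⟨hsef, hij⟩ := hinj
            have hef : e ≠ f := by
              rintro rfl
              exact hne (by simp [hij])
            rw [hm, Matrix.single_mul_single_same, hS_orth e f hef,
              Matrix.single_zero]
          · exact Matrix.single_mul_single_of_ne (h := hm) ..
        · simp [fB]
    · apply Finset.sum_eq_zero
      rintro q' -
      simp [fB]
  rw [hAB, hBA, hAA, hBB, add_zero, zero_add]
  -- split Pmat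
  have hP : Pmat r s x p mup = (∑ q, gC s x p mup q) + ∑ q, gB s x S mup q := by
    unfold Pmat
    rw [← Finset.sum_add_distrib]
    apply Finset.sum_congr rfl
    rintro ⟨⟨y, i⟩, hq⟩ -
    rcases y with e | w
    · simp [gB, gC, rext, hCK1 e]
    · simp [gB, gC, rext]
  rw [hP]
  -- the key identity: ∑ gA = ∑ gC
  have hstep1 : ∀ q : SDn s x, gA s x S mup q = ∑ q' : SUp s x, g2 s x S mup q q' := by
    rintro ⟨⟨y, i⟩, hq⟩
    rcases y with e | v
    · rw [Fintype.sum_eq_single (⟨(Sum.inr (s e), i), hq⟩ : SUp s x)]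
      · simp [gA, g2]
      · rintro ⟨⟨y', j⟩, hq'⟩ hne
        rcases y' with f | w
        · simp [g2]
        · simp only [g2]
          rw [if_neg]
          rintro ⟨rfl, rfl⟩
          exact hne rfl
    · apply Eq.symm
      apply Finset.sum_eq_zero
      rintro ⟨⟨y', j⟩, hq'⟩ -
      rcases y' with f | w <;> simp [g2]
  have hstep3 : ∀ q' : SUp s x, ∑ q : SDn s x, g2 s x S mup q q' = gC s x p mup q' := by
    rintro ⟨⟨y', j⟩, hq'⟩
    rcases y' with f | w
    · apply Finset.sum_eq_zero
      rintro ⟨⟨y, i⟩, hq⟩ -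
      rcases y with e | v <;> simp [g2]
    · -- q' = (inr w, j) ∈ SUp, so 1 ≤ j ≤ x w
      have hwj : 1 ≤ j ∧ j ≤ x w := hq'
      have hw : x w ≠ 0 := by omega
      set T : Finset E := (hemit w hw).toFinset with hT
      have hmemT : ∀ e, e ∈ T ↔ s e = w := by
        intro e; simp [hT, Set.Finite.mem_toFinset]
      have hpw : p w = ∑ e ∈ T, S e * star (S e) := by
        rw [hRCK w hw, finsum_mem_eq_finite_toFinset_sum _ (hemit w hw)]
      have key3 : ∀ q : SDn s x, g2 s x S mup q ⟨(Sum.inr w, j), hq'⟩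
          = ∑ e ∈ T, (if q.1 = (Sum.inl e, j) then
              Matrix.single (mup ⟨(Sum.inr w, j), hq'⟩) (mup ⟨(Sum.inr w, j), hq'⟩)
                (S e * star (S e)) else 0) := by
        rintro ⟨⟨y, i⟩, hq⟩
        rcases y with e₀ | v
        · by_cases hc : s e₀ = w ∧ i = j
          · obtain ⟨hw', rfl⟩ := hc
            have he₀ : e₀ ∈ T := (hmemT e₀).2 hw'
            rw [Finset.sum_eq_single_of_mem e₀ he₀ (fun b _ hb => if_neg (by
              simp only [Prod.mk.injEq, Sum.inl.injEq]
              rintro ⟨rfl, -⟩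
              exact hb rfl)), if_pos rfl]
            simp [g2, hw']
          · simp only [g2, if_neg hc]
            apply Eq.symm
            apply Finset.sum_eq_zero
            intro b hb
            apply if_neg
            simp only [Prod.mk.injEq, Sum.inl.injEq]
            rintro ⟨rfl, rfl⟩
            exact hc ⟨(hmemT _).1 hb, rfl⟩
        · apply Eq.symm
          apply Finset.sum_eq_zero
          intro b _
          apply if_neg
          simp
      calc ∑ q : SDn s x, g2 s x S mup q ⟨(Sum.inr w, j), hq'⟩
          = ∑ q : SDn s x, ∑ e ∈ T, (if q.1 = (Sum.inl e, j) then
              Matrix.single (mup ⟨(Sum.inr w, j), hq'⟩) (mup ⟨(Sum.inr w, j), hq'⟩)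
                (S e * star (S e)) else 0) := by
            exact Finset.sum_congr rfl fun q _ => key3 q
        _ = ∑ e ∈ T, ∑ q : SDn s x, (if q.1 = (Sum.inl e, j) then
              Matrix.single (mup ⟨(Sum.inr w, j), hq'⟩) (mup ⟨(Sum.inr w, j), hq'⟩)
                (S e * star (S e)) else 0) := Finset.sum_comm
        _ = ∑ e ∈ T, Matrix.single (mup ⟨(Sum.inr w, j), hq'⟩)
              (mup ⟨(Sum.inr w, j), hq'⟩) (S e * star (S e)) := by
            apply Finset.sum_congr rfl
            intro e he
            have hmem : (Sum.inl e, j) ∈ SDn s x := by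
              show 1 ≤ j ∧ j ≤ x (s e)
              rw [(hmemT e).1 he]
              exact hwj
            rw [Fintype.sum_eq_single (⟨(Sum.inl e, j), hmem⟩ : SDn s x)]
            · rw [if_pos rfl]
            · intro q hne
              apply if_neg
              intro hq1
              exact hne (Subtype.ext hq1)
        _ = gC s x p mup ⟨(Sum.inr w, j), hq'⟩ := by
            rw [← stdBM_sum, ← hpw]; simp [gC]
  have hkey : (∑ q, gA s x S mup q) = ∑ q', gC s x p mup q' :=
    calc ∑ q, gA s x S mup q = ∑ q : SDn s x, ∑ q' : SUp s x, g2 s x S mup q q' :=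
          Finset.sum_congr rfl fun q _ => hstep1 q
      _ = ∑ q' : SUp s x, ∑ q : SDn s x, g2 s x S mup q q' := Finset.sum_comm
      _ = ∑ q', gC s x p mup q' := Finset.sum_congr rfl fun q' _ => hstep3 q'
  rw [hkey]
end
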